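/- arXiv:1708.07336 — 5 statements merged into one kernel-verified Lean document; each statement's English description precedes it below -/
import Mathlib

section
/- Let x : Fin N⁺ → ℝⁿ be a family of positive instances and x' : Fin N⁻ → ℝⁿ a family of negative instances, let ⟪·,·⟫ and ‖·‖ denote the standard inner product and norm on ℝⁿ, let [z]₊ = max(z, 0), and let C ≥ 0. Then for every w ∈ ℝⁿ: (1/2)‖w‖² + C · Σ_{i} Σ_{j} [1 - ⟪w, x i - x' j⟫]₊ ≤ (1/4) · ( (1/2)‖2w‖² + 2·N⁻·C · Σ_{i} [1 - ⟪2w, x i⟫]₊ + 2·N⁺·C · Σ_{j} [1 + ⟪2w, x' j⟫]₊ ). -/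
open scoped RealInnerProductSpace

/-- Theorem 1 of the paper: the RankSVM objective with pair weights `C/2`
(equivalently, weight `C` per positive pair) is upper-bounded by `1/4` times the
point-wise weighted SVM objective with `C₊ = 2N⁻·C`, `C₋ = 2N⁺·C`, evaluated at `2w`. -/
theorem ranksvm_obj_le_quarter_wsvm_obj {n Np Nm : ℕ}
    (x : Fin Np → EuclideanSpace ℝ (Fin n)) (x' : Fin Nm → EuclideanSpace ℝ (Fin n))
    (C : ℝ) (hC : 0 ≤ C) (w : EuclideanSpace ℝ (Fin n)) :
    (1 / 2) * ‖w‖ ^ 2 +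
        C * ∑ i, ∑ j, max (1 - ⟪w, x i - x' j⟫) 0 ≤
      (1 / 4) *
        ((1 / 2) * ‖(2 : ℝ) • w‖ ^ 2 +
          2 * (Nm : ℝ) * C * ∑ i, max (1 - ⟪(2 : ℝ) • w, x i⟫) 0 +
          2 * (Np : ℝ) * C * ∑ j, max (1 + ⟪(2 : ℝ) • w, x' j⟫) 0) := by
  set A : Fin Np → ℝ := fun i => max (1 - ⟪(2 : ℝ) • w, x i⟫) 0 with hA
  set B : Fin Nm → ℝ := fun j => max (1 + ⟪(2 : ℝ) • w, x' j⟫) 0 with hB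
  have hnorm : ‖(2 : ℝ) • w‖ ^ 2 = 4 * ‖w‖ ^ 2 := by
    rw [norm_smul, mul_pow]; norm_num
  have key : ∀ i j, max (1 - ⟪w, x i - x' j⟫) 0 ≤ (1 / 2) * (A i + B j) := by
    intro i j
    have h1 : 1 - ⟪w, x i - x' j⟫ =
        (1 / 2) * ((1 - ⟪(2 : ℝ) • w, x i⟫) + (1 + ⟪(2 : ℝ) • w, x' j⟫)) := by
      rw [inner_sub_right, inner_smul_left, inner_smul_left]
      simp; ring
    have ha1 : 1 - ⟪(2 : ℝ) • w, x i⟫ ≤ A i := le_max_left _ _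
    have ha2 : (0:ℝ) ≤ A i := le_max_right _ _
    have hb1 : 1 + ⟪(2 : ℝ) • w, x' j⟫ ≤ B j := le_max_left _ _
    have hb2 : (0:ℝ) ≤ B j := le_max_right _ _
    apply max_le <;> [rw [h1]; skip] <;> linarith
  have hsum : ∑ i, ∑ j, max (1 - ⟪w, x i - x' j⟫) 0 ≤
      (1 / 2) * ((Nm : ℝ) * ∑ i, A i + (Np : ℝ) * ∑ j, B j) := by
    have inner_eq : ∀ i, ∑ j, (1 / 2) * (A i + B j)
        = (1 / 2) * ((Nm : ℝ) * A i + ∑ j, B j) := by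
      intro i
      rw [← Finset.mul_sum, Finset.sum_add_distrib, Finset.sum_const, Finset.card_univ,
        Fintype.card_fin, nsmul_eq_mul]
    calc ∑ i, ∑ j, max (1 - ⟪w, x i - x' j⟫) 0
        ≤ ∑ i, ∑ j, (1 / 2) * (A i + B j) :=
          Finset.sum_le_sum fun i _ => Finset.sum_le_sum fun j _ => key i j
      _ = ∑ i, (1 / 2) * ((Nm : ℝ) * A i + ∑ j, B j) :=
          Finset.sum_congr rfl fun i _ => inner_eq i
      _ = (1 / 2) * ((Nm : ℝ) * ∑ i, A i + (Np : ℝ) * ∑ j, B j) := by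
          rw [← Finset.mul_sum, Finset.sum_add_distrib, ← Finset.mul_sum,
            Finset.sum_const, Finset.card_univ, Fintype.card_fin, nsmul_eq_mul]
  rw [hnorm]
  nlinarith [mul_le_mul_of_nonneg_left hsum hC]
end

section
/- Let x : Fin N⁺ → ℝⁿ and x' : Fin N⁻ → ℝⁿ be families of positive and negative instances and let C ≥ 0. Define F(w) = (1/2)‖w‖² + C · Σ_{i} Σ_{j} max(1 - ⟪w, x i - x' j⟫, 0) and G(u) = (1/2)‖u‖² + 2·N⁻·C · Σ_{i} max(1 - ⟪u, x i⟫, 0) + 2·N⁺·C · Σ_{j} max(1 + ⟪u, x' j⟫, 0). Then the infimum over w ∈ ℝⁿ of F(w) is at most (1/4) times the infimum over u ∈ ℝⁿ of G(u). -/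
open scoped RealInnerProductSpace

/-- The optimization-level consequence of Theorem 1 of the paper: the infimum of the
RankSVM objective `F` is at most `1/4` times the infimum of the point-wise weighted
SVM objective `G`. -/
theorem iInf_ranksvm_le_quarter_iInf_wsvm {n Np Nm : ℕ}
    (x : Fin Np → EuclideanSpace ℝ (Fin n)) (x' : Fin Nm → EuclideanSpace ℝ (Fin n))
    (C : ℝ) (hC : 0 ≤ C)
    (F G : EuclideanSpace ℝ (Fin n) → ℝ)
    (hF : ∀ w, F w = (1 / 2) * ‖w‖ ^ 2 +
        C * ∑ i, ∑ j, max (1 - ⟪w, x i - x' j⟫) 0)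
    (hG : ∀ u, G u = (1 / 2) * ‖u‖ ^ 2 +
        2 * (Nm : ℝ) * C * ∑ i, max (1 - ⟪u, x i⟫) 0 +
        2 * (Np : ℝ) * C * ∑ j, max (1 + ⟪u, x' j⟫) 0) :
    (⨅ w, F w) ≤ (1 / 4) * ⨅ u, G u := by
  have hFnn : ∀ w, 0 ≤ F w := by
    intro w
    rw [hF]
    have : (0:ℝ) ≤ ∑ i, ∑ j, max (1 - ⟪w, x i - x' j⟫) 0 := by
      apply Finset.sum_nonneg; intro i _
      apply Finset.sum_nonneg; intro j _
      exact le_max_right _ _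
    positivity
  have hbdd : BddBelow (Set.range F) := ⟨0, by rintro _ ⟨w, rfl⟩; exact hFnn w⟩
  have key : ∀ u, F ((2:ℝ)⁻¹ • u) ≤ (1/4) * G u := by
    intro u
    rw [hF, hG]
    have hnorm : ‖(2:ℝ)⁻¹ • u‖ ^ 2 = (1/4) * ‖u‖ ^ 2 := by
      rw [norm_smul, Real.norm_eq_abs, mul_pow]
      norm_num
    set S1 := ∑ i, max (1 - ⟪u, x i⟫) 0 with hS1
    set S2 := ∑ j, max (1 + ⟪u, x' j⟫) 0 with hS2
    have hsum : ∑ i, ∑ j, max (1 - ⟪(2:ℝ)⁻¹ • u, x i - x' j⟫) 0 ≤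
        (Nm:ℝ)/2 * S1 + (Np:ℝ)/2 * S2 := by
      have step : ∀ i j, max (1 - ⟪(2:ℝ)⁻¹ • u, x i - x' j⟫) 0 ≤
          (1/2) * max (1 - ⟪u, x i⟫) 0 + (1/2) * max (1 + ⟪u, x' j⟫) 0 := by
        intro i j
        rw [real_inner_smul_left, inner_sub_right]
        apply max_le
        · have h1 : 1 - ⟪u, x i⟫ ≤ max (1 - ⟪u, x i⟫) 0 := le_max_left _ _
          have h2 : 1 + ⟪u, x' j⟫ ≤ max (1 + ⟪u, x' j⟫) 0 := le_max_left _ _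
          linarith
        · have h1 : (0:ℝ) ≤ max (1 - ⟪u, x i⟫) 0 := le_max_right _ _
          have h2 : (0:ℝ) ≤ max (1 + ⟪u, x' j⟫) 0 := le_max_right _ _
          linarith
      calc ∑ i, ∑ j, max (1 - ⟪(2:ℝ)⁻¹ • u, x i - x' j⟫) 0
          ≤ ∑ i, ∑ j, ((1/2) * max (1 - ⟪u, x i⟫) 0 + (1/2) * max (1 + ⟪u, x' j⟫) 0) := by
            apply Finset.sum_le_sum; intro i _
            apply Finset.sum_le_sum; intro j _
            exact step i j
        _ = (Nm:ℝ)/2 * S1 + (Np:ℝ)/2 * S2 := by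
            simp only [Finset.sum_add_distrib, Finset.sum_const, Finset.card_univ,
              Fintype.card_fin, ← Finset.mul_sum, ← Finset.sum_mul, nsmul_eq_mul, hS1, hS2]
            ring
    have hmul := mul_le_mul_of_nonneg_left hsum hC
    rw [hnorm]
    nlinarith [hmul]
  have h1 : (⨅ w, F w) ≤ ⨅ u, (1/4) * G u :=
    le_ciInf fun u => (ciInf_le hbdd _).trans (key u)
  rw [Real.mul_iInf_of_nonneg (by norm_num : (0:ℝ) ≤ 1/4)]; exact h1
end

section
/- Let x : Fin N⁺ → ℝⁿ be a family of positive instances and x' : Fin N⁻ → ℝⁿ a family of negative instances, let ⟪·,·⟫ and ‖·‖ denote the standard inner product and norm on ℝⁿ, let [z]₊ = max(z, 0), and let C ≥ 0. Then for every θ ∈ ℝ and every w ∈ ℝⁿ: (1/2)‖w‖² + C · Σ_{i} Σ_{j} [1 - ⟪w, x i - x' j⟫]₊ ≤ (1/4) · ( (1/2)‖2w‖² + 2·N⁻·C · Σ_{i} [1 - ⟪2w, x i⟫ + 2θ]₊ + 2·N⁺·C · Σ_{j} [1 + ⟪2w, x' j⟫ - 2θ]₊ ). -/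
open scoped RealInnerProductSpace

lemma hinge_subadd (a b : ℝ) : max (a + b) 0 ≤ max a 0 + max b 0 := by
  rcases le_total (a + b) 0 with h | h
  · simpa [max_eq_right h] using add_nonneg (le_max_right a 0) (le_max_right b 0)
  · rw [max_eq_left h]
    exact add_le_add (le_max_left a 0) (le_max_left b 0)

/-- Theorem 2 of the paper: the RankSVM objective with pair weights `C/2` is
upper-bounded by `1/4` times the standard (thresholded) SVM objective with
`C₊ = 2N⁻·C`, `C₋ = 2N⁺·C`, evaluated at the scaled pair `(2θ, 2w)`. -/
theorem ranksvm_obj_le_quarter_standard_svm_obj {n Np Nm : ℕ}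
    (x : Fin Np → EuclideanSpace ℝ (Fin n)) (x' : Fin Nm → EuclideanSpace ℝ (Fin n))
    (C : ℝ) (hC : 0 ≤ C) (θ : ℝ) (w : EuclideanSpace ℝ (Fin n)) :
    (1 / 2) * ‖w‖ ^ 2 +
        C * ∑ i, ∑ j, max (1 - ⟪w, x i - x' j⟫) 0 ≤
      (1 / 4) *
        ((1 / 2) * ‖(2 : ℝ) • w‖ ^ 2 +
          2 * (Nm : ℝ) * C * ∑ i, max (1 - ⟪(2 : ℝ) • w, x i⟫ + 2 * θ) 0 +
          2 * (Np : ℝ) * C * ∑ j, max (1 + ⟪(2 : ℝ) • w, x' j⟫ - 2 * θ) 0) := by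
  have key : ∀ i j, max (1 - ⟪w, x i - x' j⟫) 0 ≤
      (1 / 2) * (max (1 - ⟪(2 : ℝ) • w, x i⟫ + 2 * θ) 0
        + max (1 + ⟪(2 : ℝ) • w, x' j⟫ - 2 * θ) 0) := by
    intro i j
    have h2 : (2 : ℝ) * (1 - ⟪w, x i - x' j⟫) =
        (1 - ⟪(2 : ℝ) • w, x i⟫ + 2 * θ) + (1 + ⟪(2 : ℝ) • w, x' j⟫ - 2 * θ) := by
      rw [inner_sub_right, real_inner_smul_left, real_inner_smul_left]; ring
    have : max ((1 - ⟪(2 : ℝ) • w, x i⟫ + 2 * θ) + (1 + ⟪(2 : ℝ) • w, x' j⟫ - 2 * θ)) 0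
        ≤ max (1 - ⟪(2 : ℝ) • w, x i⟫ + 2 * θ) 0 + max (1 + ⟪(2 : ℝ) • w, x' j⟫ - 2 * θ) 0 :=
      hinge_subadd _ _
    rw [← h2] at this
    have hm : max ((2 : ℝ) * (1 - ⟪w, x i - x' j⟫)) 0 = 2 * max (1 - ⟪w, x i - x' j⟫) 0 := by
      rw [mul_max_of_nonneg _ _ (by norm_num : (0:ℝ) ≤ 2), mul_zero]
    rw [hm] at this
    linarith
  have hsum : ∑ i, ∑ j, max (1 - ⟪w, x i - x' j⟫) 0 ≤
      (1 / 2) * ((Nm : ℝ) * ∑ i, max (1 - ⟪(2 : ℝ) • w, x i⟫ + 2 * θ) 0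
        + (Np : ℝ) * ∑ j, max (1 + ⟪(2 : ℝ) • w, x' j⟫ - 2 * θ) 0) := by
    calc ∑ i, ∑ j, max (1 - ⟪w, x i - x' j⟫) 0
        ≤ ∑ i, ∑ j, (1 / 2) * (max (1 - ⟪(2 : ℝ) • w, x i⟫ + 2 * θ) 0
            + max (1 + ⟪(2 : ℝ) • w, x' j⟫ - 2 * θ) 0) := by
          apply Finset.sum_le_sum; intro i _
          exact Finset.sum_le_sum fun j _ => key i j
      _ = (1 / 2) * ((Nm : ℝ) * ∑ i, max (1 - ⟪(2 : ℝ) • w, x i⟫ + 2 * θ) 0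
            + (Np : ℝ) * ∑ j, max (1 + ⟪(2 : ℝ) • w, x' j⟫ - 2 * θ) 0) := by
          simp only [mul_add, Finset.sum_add_distrib, Finset.sum_const, Finset.card_univ,
            Fintype.card_fin, nsmul_eq_mul, ← Finset.sum_mul, ← Finset.mul_sum]
          ring
  have hnorm : ‖(2 : ℝ) • w‖ ^ 2 = 4 * ‖w‖ ^ 2 := by
    rw [norm_smul]; simp; ring
  have := mul_le_mul_of_nonneg_left hsum hC
  rw [hnorm]
  nlinarith [this]
end

section
/- Let x : Fin N⁺ → ℝⁿ and x' : Fin N⁻ → ℝⁿ be families of positive and negative instances and let C ≥ 0. Define F(w) = (1/2)‖w‖² + C · Σ_{i} Σ_{j} max(1 - ⟪w, x i - x' j⟫, 0) and H(τ, u) = (1/2)‖u‖² + 2·N⁻·C · Σ_{i} max(1 - ⟪u, x i⟫ + τ, 0) + 2·N⁺·C · Σ_{j} max(1 + ⟪u, x' j⟫ - τ, 0) for τ ∈ ℝ, u ∈ ℝⁿ. Then the infimum over w ∈ ℝⁿ of F(w) is at most (1/4) times the infimum over (τ, u) ∈ ℝ × ℝⁿ of H(τ, u). -/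
open scoped RealInnerProductSpace

/-- The optimization-level consequence of Theorem 2 of the paper: the infimum of the
RankSVM objective `F` is at most `1/4` times the infimum over `(τ, u)` of the standard
(thresholded) SVM objective `H`. -/
theorem iInf_ranksvm_le_quarter_iInf_standard_svm {n Np Nm : ℕ}
    (x : Fin Np → EuclideanSpace ℝ (Fin n)) (x' : Fin Nm → EuclideanSpace ℝ (Fin n))
    (C : ℝ) (hC : 0 ≤ C)
    (F : EuclideanSpace ℝ (Fin n) → ℝ)
    (H : ℝ → EuclideanSpace ℝ (Fin n) → ℝ)
    (hF : ∀ w, F w = (1 / 2) * ‖w‖ ^ 2 +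
        C * ∑ i, ∑ j, max (1 - ⟪w, x i - x' j⟫) 0)
    (hH : ∀ τ u, H τ u = (1 / 2) * ‖u‖ ^ 2 +
        2 * (Nm : ℝ) * C * ∑ i, max (1 - ⟪u, x i⟫ + τ) 0 +
        2 * (Np : ℝ) * C * ∑ j, max (1 + ⟪u, x' j⟫ - τ) 0) :
    (⨅ w, F w) ≤ (1 / 4) * ⨅ p : ℝ × EuclideanSpace ℝ (Fin n), H p.1 p.2 := by
  have hFnn : ∀ w, 0 ≤ F w := by
    intro w
    rw [hF]
    have h1 : (0:ℝ) ≤ (1/2) * ‖w‖ ^ 2 := by positivity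
    have h2 : (0:ℝ) ≤ ∑ i, ∑ j, max (1 - ⟪w, x i - x' j⟫) 0 :=
      Finset.sum_nonneg fun i _ => Finset.sum_nonneg fun j _ => le_max_right _ _
    nlinarith
  have hbdd : BddBelow (Set.range F) := ⟨0, by rintro _ ⟨w, rfl⟩; exact hFnn w⟩
  rw [Real.mul_iInf_of_nonneg (by norm_num : (0:ℝ) ≤ 1/4)]
  refine le_ciInf fun p => ?_
  obtain ⟨τ, u⟩ := p
  refine le_trans (ciInf_le hbdd ((1/2 : ℝ) • u)) ?_
  rw [hF, hH]
  have hnorm : ‖(1/2 : ℝ) • u‖ ^ 2 = (1/4) * ‖u‖ ^ 2 := by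
    have h : ‖(1/2 : ℝ) • u‖ = (1/2) * ‖u‖ := by
      rw [norm_smul, Real.norm_eq_abs, abs_of_pos]; norm_num
    rw [h]; ring
  set A : Fin Np → ℝ := fun i => max (1 - ⟪u, x i⟫ + τ) 0 with hA
  set B : Fin Nm → ℝ := fun j => max (1 + ⟪u, x' j⟫ - τ) 0 with hB
  have key : ∀ i j, max (1 - ⟪(1/2 : ℝ) • u, x i - x' j⟫) 0 ≤ (1/2) * (A i + B j) := by
    intro i j
    have hin : ⟪(1/2 : ℝ) • u, x i - x' j⟫ = (1/2) * (⟪u, x i⟫ - ⟪u, x' j⟫) := by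
      rw [real_inner_smul_left, inner_sub_right]
    rw [hin]
    have h1 : 1 - ⟪u, x i⟫ + τ ≤ A i := le_max_left _ _
    have h2 : 1 + ⟪u, x' j⟫ - τ ≤ B j := le_max_left _ _
    have h3 : (0:ℝ) ≤ A i := le_max_right _ _
    have h4 : (0:ℝ) ≤ B j := le_max_right _ _
    rcases le_or_gt (1 - (1/2) * (⟪u, x i⟫ - ⟪u, x' j⟫)) 0 with h | h
    · rw [max_eq_right h]; linarith
    · rw [max_eq_left h.le]; linarith
  have hsum : ∑ i, ∑ j, max (1 - ⟪(1/2 : ℝ) • u, x i - x' j⟫) 0 ≤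
      (1/2) * ((Nm : ℝ) * ∑ i, A i + (Np : ℝ) * ∑ j, B j) := by
    calc ∑ i, ∑ j, max (1 - ⟪(1/2 : ℝ) • u, x i - x' j⟫) 0
        ≤ ∑ i, ∑ j, (1/2) * (A i + B j) :=
          Finset.sum_le_sum fun i _ => Finset.sum_le_sum fun j _ => key i j
      _ = (1/2) * ((Nm : ℝ) * ∑ i, A i + (Np : ℝ) * ∑ j, B j) := by
          simp only [← Finset.mul_sum, Finset.sum_add_distrib, Finset.sum_const,
            Finset.card_univ, Fintype.card_fin, nsmul_eq_mul]
  have := mul_le_mul_of_nonneg_left hsum hC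
  rw [hnorm]
  nlinarith [this]
end

section
/- Let x : Fin N⁺ → ℝⁿ be a family of positive instances and x' : Fin N⁻ → ℝⁿ a family of negative instances, and let w ∈ ℝⁿ. Then the number of mis-ordered pairs satisfies Σ_{i} Σ_{j} 𝟙(⟪w, x i - x' j⟫ ≤ 0) ≤ (N⁻/2) · Σ_{i} max(1 - 2⟪w, x i⟫, 0) + (N⁺/2) · Σ_{j} max(1 + 2⟪w, x' j⟫, 0), where 𝟙(P) equals 1 if the condition P holds and 0 otherwise. -/
open scoped RealInnerProductSpace

/-- The number of mis-ordered pairs of a linear ranker `w` is upper-bounded by the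
balanced point-wise hinge losses: `Σᵢ Σⱼ 𝟙(⟪w, x i - x' j⟫ ≤ 0) ≤
(N⁻/2) Σᵢ [1 - 2⟪w, x i⟫]₊ + (N⁺/2) Σⱼ [1 + 2⟪w, x' j⟫]₊`. -/
theorem misordered_pairs_le_balanced_pointwise_hinge {n Np Nm : ℕ}
    (x : Fin Np → EuclideanSpace ℝ (Fin n)) (x' : Fin Nm → EuclideanSpace ℝ (Fin n))
    (w : EuclideanSpace ℝ (Fin n)) :
    (∑ i, ∑ j, if ⟪w, x i - x' j⟫ ≤ 0 then (1 : ℝ) else 0) ≤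
      ((Nm : ℝ) / 2) * ∑ i, max (1 - 2 * ⟪w, x i⟫) 0 +
        ((Np : ℝ) / 2) * ∑ j, max (1 + 2 * ⟪w, x' j⟫) 0 := by
  have key : ∀ i j, (if ⟪w, x i - x' j⟫ ≤ 0 then (1 : ℝ) else 0) ≤
      (max (1 - 2 * ⟪w, x i⟫) 0 + max (1 + 2 * ⟪w, x' j⟫) 0) / 2 := by
    intro i j
    have h1 : (1 - 2 * ⟪w, x i⟫) ≤ max (1 - 2 * ⟪w, x i⟫) 0 := le_max_left _ _
    have h2 : (1 + 2 * ⟪w, x' j⟫) ≤ max (1 + 2 * ⟪w, x' j⟫) 0 := le_max_left _ _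
    have h3 : (0:ℝ) ≤ max (1 - 2 * ⟪w, x i⟫) 0 := le_max_right _ _
    have h4 : (0:ℝ) ≤ max (1 + 2 * ⟪w, x' j⟫) 0 := le_max_right _ _
    split
    · next h =>
      rw [inner_sub_right] at h
      nlinarith
    · nlinarith
  calc (∑ i, ∑ j, if ⟪w, x i - x' j⟫ ≤ 0 then (1 : ℝ) else 0)
      ≤ ∑ i, ∑ j, (max (1 - 2 * ⟪w, x i⟫) 0 + max (1 + 2 * ⟪w, x' j⟫) 0) / 2 := by
        apply Finset.sum_le_sum; intro i _
        exact Finset.sum_le_sum fun j _ => key i j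
    _ = ((Nm : ℝ) / 2) * ∑ i, max (1 - 2 * ⟪w, x i⟫) 0 +
        ((Np : ℝ) / 2) * ∑ j, max (1 + 2 * ⟪w, x' j⟫) 0 := by
        rw [Finset.sum_comm]
        simp only [Finset.sum_add_distrib, Finset.sum_div, Finset.sum_const,
          Finset.card_univ, Fintype.card_fin, nsmul_eq_mul, Finset.mul_sum, ← Finset.sum_div]
        rw [add_div, Finset.sum_div, Finset.sum_div]
        congr 1 <;> exact Finset.sum_congr rfl fun _ _ => by ring
end
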